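/- Let p be a polynomial and f a polynomial vector field on ℝ^n. For every x₀ ∈ ℝ^n, exactly one of the following holds: x₀ ∈ In_f(S(p ≥ 0)) or x₀ ∈ Out_f(S(p ≥ 0)), where S(p ≥ 0) = {x : p(x) ≥ 0}; the same dichotomy holds for S(p > 0). -/

import Mathlib

open MvPolynomial Set

/-- `φ` is a global flow of the polynomial vector field `f`. -/
def IsPolyFlow {n : ℕ} (f : Fin n → MvPolynomial (Fin n) ℝ)
    (φ : (Fin n → ℝ) → ℝ → (Fin n → ℝ)) : Prop :=
  (∀ x₀, φ x₀ 0 = x₀) ∧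
    ∀ x₀ t (i : Fin n),
      HasDerivAt (fun s => φ x₀ s i) (MvPolynomial.eval (φ x₀ t) (f i)) t

/-- `In_f(A)`: points whose forward trajectory enters `A` immediately. -/
def InSet {n : ℕ} (φ : (Fin n → ℝ) → ℝ → (Fin n → ℝ)) (A : Set (Fin n → ℝ)) :
    Set (Fin n → ℝ) :=
  {x₀ | ∃ ε > 0, ∀ t ∈ Set.Ioo (0:ℝ) ε, φ x₀ t ∈ A}

/-- `Out_f(A)`: points whose forward trajectory leaves `A` immediately. -/
def OutSet {n : ℕ} (φ : (Fin n → ℝ) → ℝ → (Fin n → ℝ)) (A : Set (Fin n → ℝ)) :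
    Set (Fin n → ℝ) :=
  {x₀ | ∃ ε > 0, ∀ t ∈ Set.Ioo (0:ℝ) ε, φ x₀ t ∉ A}

noncomputable def lieD {n : ℕ} (f : Fin n → MvPolynomial (Fin n) ℝ)
    (q : MvPolynomial (Fin n) ℝ) : MvPolynomial (Fin n) ℝ :=
  ∑ i, f i * pderiv i q

lemma lieD_C {n : ℕ} (f : Fin n → MvPolynomial (Fin n) ℝ) (a : ℝ) :
    lieD f (C a) = 0 := by simp [lieD]

lemma lieD_add {n : ℕ} (f : Fin n → MvPolynomial (Fin n) ℝ) (q r : MvPolynomial (Fin n) ℝ) :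
    lieD f (q + r) = lieD f q + lieD f r := by
  simp [lieD, map_add, mul_add, Finset.sum_add_distrib]

lemma lieD_neg {n : ℕ} (f : Fin n → MvPolynomial (Fin n) ℝ) (q : MvPolynomial (Fin n) ℝ) :
    lieD f (-q) = -(lieD f q) := by
  simp [lieD, Finset.sum_neg_distrib]

lemma lieD_mul_X {n : ℕ} (f : Fin n → MvPolynomial (Fin n) ℝ) (q : MvPolynomial (Fin n) ℝ)
    (j : Fin n) : lieD f (q * X j) = lieD f q * X j + q * f j := by
  simp only [lieD, pderiv_mul, mul_add, Finset.sum_add_distrib, Finset.mul_sum, Finset.sum_mul]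
  congr 1
  · apply Finset.sum_congr rfl; intro i _; ring
  · rw [Finset.sum_eq_single j]
    · simp [mul_comm]
    · intro i _ hi; simp [Pi.single_apply, hi]
    · simp

lemma lieD_iterate_neg {n : ℕ} (f : Fin n → MvPolynomial (Fin n) ℝ) (q : MvPolynomial (Fin n) ℝ)
    (k : ℕ) : (lieD f)^[k] (-q) = -((lieD f)^[k] q) := by
  induction k generalizing q with
  | zero => simp
  | succ k ih => simp [Function.iterate_succ_apply, lieD_neg, ih]

lemma chainRule {n : ℕ} {f : Fin n → MvPolynomial (Fin n) ℝ}
    {φ : (Fin n → ℝ) → ℝ → (Fin n → ℝ)} (hφ : IsPolyFlow f φ)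
    (x₀ : Fin n → ℝ) (q : MvPolynomial (Fin n) ℝ) (t : ℝ) :
    HasDerivAt (fun s => MvPolynomial.eval (φ x₀ s) q)
      (MvPolynomial.eval (φ x₀ t) (lieD f q)) t := by
  induction q using MvPolynomial.induction_on with
  | C a => simpa [lieD_C] using hasDerivAt_const t (a : ℝ)
  | add q r hq hr => simpa [lieD_add, Pi.add_def] using hq.add hr
  | mul_X q j hq =>
    have := hq.mul (hφ.2 x₀ t j)
    simpa [lieD_mul_X, mul_comm, mul_assoc, mul_left_comm, Pi.mul_def] using this


lemma eval_sign_pos {n : ℕ} {f : Fin n → MvPolynomial (Fin n) ℝ}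
    {φ : (Fin n → ℝ) → ℝ → (Fin n → ℝ)} (hφ : IsPolyFlow f φ) (x₀ : Fin n → ℝ) :
    ∀ (k : ℕ) (q : MvPolynomial (Fin n) ℝ),
      (∀ j < k, MvPolynomial.eval x₀ ((lieD f)^[j] q) = 0) →
      0 < MvPolynomial.eval x₀ ((lieD f)^[k] q) →
      ∃ ε > 0, ∀ t ∈ Set.Ioo (0:ℝ) ε, 0 < MvPolynomial.eval (φ x₀ t) q := by
  intro k
  induction k with
  | zero =>
    intro q _ hpos
    have hc : ContinuousAt (fun s => MvPolynomial.eval (φ x₀ s) q) 0 :=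
      (chainRule hφ x₀ q 0).continuousAt
    have h0 : MvPolynomial.eval (φ x₀ 0) q = MvPolynomial.eval x₀ q := by rw [hφ.1]
    simp only [Function.iterate_zero, id] at hpos
    have h1 : ∀ᶠ s in nhds (0:ℝ), MvPolynomial.eval (φ x₀ s) q ∈ Set.Ioi (0:ℝ) := by
      apply hc
      show Set.Ioi (0:ℝ) ∈ nhds (MvPolynomial.eval (φ x₀ 0) q)
      rw [h0]
      exact Ioi_mem_nhds hpos
    rw [Metric.eventually_nhds_iff] at h1
    obtain ⟨δ, hδ, hb⟩ := h1
    exact ⟨δ, hδ, fun t ht => hb (by simp [abs_of_pos ht.1, Real.dist_eq]; exact ht.2)⟩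
  | succ k ih =>
    intro q hzero hpos
    obtain ⟨ε, hε, hsign⟩ := ih (lieD f q)
      (fun j hj => by
        rw [← Function.iterate_succ_apply]
        exact hzero (j+1) (Nat.succ_lt_succ hj))
      (by rwa [← Function.iterate_succ_apply])
    have hg0 : MvPolynomial.eval (φ x₀ 0) q = 0 := by
      rw [hφ.1]
      simpa using hzero 0 (Nat.succ_pos k)
    have hcont : Continuous (fun s => MvPolynomial.eval (φ x₀ s) q) :=
      continuous_iff_continuousAt.2 fun s => (chainRule hφ x₀ q s).continuousAt
    have hmono : StrictMonoOn (fun s => MvPolynomial.eval (φ x₀ s) q) (Set.Icc 0 ε) := by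
      apply strictMonoOn_of_deriv_pos (convex_Icc 0 ε) hcont.continuousOn
      intro s hs
      rw [interior_Icc] at hs
      rw [(chainRule hφ x₀ q s).deriv]
      exact hsign s hs
    refine ⟨ε, hε, fun t ht => ?_⟩
    have := hmono ⟨le_refl 0, hε.le⟩ ⟨ht.1.le, ht.2.le⟩ ht.1
    simpa [hg0] using this

lemma traj_zero {n : ℕ} {f : Fin n → MvPolynomial (Fin n) ℝ}
    {φ : (Fin n → ℝ) → ℝ → (Fin n → ℝ)} (hφ : IsPolyFlow f φ) (x₀ : Fin n → ℝ)
    (p : MvPolynomial (Fin n) ℝ) (hz : ∀ k, MvPolynomial.eval x₀ ((lieD f)^[k] p) = 0) :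
    ∀ t ∈ Set.Icc (0:ℝ) 1, MvPolynomial.eval (φ x₀ t) p = 0 := by
  classical
  set g : ℕ → MvPolynomial (Fin n) ℝ := fun k => (lieD f)^[k] p with hg
  -- Noetherian stabilization
  let chain : ℕ →o Ideal (MvPolynomial (Fin n) ℝ) :=
    ⟨fun m => Ideal.span (g '' Set.Iic m),
     fun a b hab => Ideal.span_mono (Set.image_mono (Set.Iic_subset_Iic.2 hab))⟩
  obtain ⟨N, hN⟩ := monotone_stabilizes_iff_noetherian.mpr
    (inferInstance : IsNoetherianRing (MvPolynomial (Fin n) ℝ)) chain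
  have hmem : g (N+1) ∈ chain N := by
    rw [hN (N+1) (Nat.le_succ N)]
    exact Ideal.subset_span ⟨N+1, Set.mem_Iic.2 le_rfl, rfl⟩
  have himg : g '' Set.Iic N = Set.range (fun j : Fin (N+1) => g j) := by
    ext x
    constructor
    · rintro ⟨k, hk, rfl⟩; exact ⟨⟨k, Nat.lt_succ_of_le hk⟩, rfl⟩
    · rintro ⟨j, rfl⟩; exact ⟨j, Set.mem_Iic.2 (Nat.lt_succ_iff.mp j.isLt), rfl⟩
  have hmem' : g (N+1) ∈ Submodule.span (MvPolynomial (Fin n) ℝ)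
      (Set.range (fun j : Fin (N+1) => g j)) := by
    rw [← himg]; exact hmem
  rw [Submodule.mem_span_range_iff_exists_fun] at hmem'
  obtain ⟨a, ha⟩ := hmem'
  -- the vector of iterated Lie derivatives along the flow
  set h : ℝ → (Fin (N+1) → ℝ) := fun t j => MvPolynomial.eval (φ x₀ t) (g j) with hh
  have h0 : h 0 = 0 := by
    funext j; simp only [hh]; rw [hφ.1]; exact hz j
  set h' : ℝ → (Fin (N+1) → ℝ) := fun t j => MvPolynomial.eval (φ x₀ t) (g (j+1)) with hh'
  have hderiv : ∀ t, HasDerivAt h (h' t) t := by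
    intro t
    rw [hasDerivAt_pi]
    intro j
    have := chainRule hφ x₀ (g j) t
    simpa [hh, hh', hg, ← Function.iterate_succ_apply'] using this
  -- bounds for the coefficients on [0,1]
  have hcb : ∀ j : Fin (N+1), ∃ C : ℝ, 0 ≤ C ∧
      ∀ t ∈ Set.Icc (0:ℝ) 1, |MvPolynomial.eval (φ x₀ t) (a j)| ≤ C := by
    intro j
    have hcont : ContinuousOn (fun t => MvPolynomial.eval (φ x₀ t) (a j)) (Set.Icc 0 1) :=
      (continuous_iff_continuousAt.2 fun s => (chainRule hφ x₀ (a j) s).continuousAt).continuousOn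
    obtain ⟨C, hC⟩ := (isCompact_Icc).exists_bound_of_continuousOn hcont
    exact ⟨C, le_trans (abs_nonneg _) (hC 0 ⟨le_refl 0, zero_le_one⟩), fun t ht => hC t ht⟩
  choose C hC0 hCb using hcb
  set K : ℝ := 1 + ∑ j, C j with hK
  have hK1 : (1:ℝ) ≤ K := by
    have : (0:ℝ) ≤ ∑ j, C j := Finset.sum_nonneg fun j _ => hC0 j
    linarith
  have hKsum : ∑ j, C j ≤ K := by linarith [hK1]; 
  have key : ∀ t ∈ Set.Icc (0:ℝ) 1, ‖h t‖ ≤ gronwallBound 0 K 0 (t - 0) := by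
    apply norm_le_gronwallBound_of_norm_deriv_right_le
      (f' := h')
      (continuous_iff_continuousAt.2 fun s => (hderiv s).continuousAt).continuousOn
      (fun t _ => (hderiv t).hasDerivWithinAt)
      (by simp [h0])
    intro t ht
    rw [add_zero]
    have hKh : 0 ≤ K * ‖h t‖ := mul_nonneg (by linarith) (norm_nonneg _)
    rw [pi_norm_le_iff_of_nonneg hKh]
    intro j
    rcases lt_or_eq_of_le (Nat.lt_succ_iff.mp j.isLt) with hj | hj
    · -- j < N : the derivative component is the next coordinate
      have : h' t j = h t ⟨j.val + 1, Nat.succ_lt_succ hj⟩ := rfl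
      rw [this]
      calc ‖h t ⟨j.val+1, Nat.succ_lt_succ hj⟩‖ ≤ ‖h t‖ := norm_le_pi_norm _ _
        _ = 1 * ‖h t‖ := (one_mul _).symm
        _ ≤ K * ‖h t‖ := mul_le_mul_of_nonneg_right hK1 (norm_nonneg _)
    · -- j = N : use the Noetherian relation
      have hrel : h' t j = ∑ i, MvPolynomial.eval (φ x₀ t) (a i) * h t i := by
        have : g (j.val + 1) = ∑ i, a i * g i := by rw [hj, ← ha]; rfl
        simp only [hh', hh, this, map_sum, map_mul, smul_eq_mul]
      rw [hrel]
      have hIcc : t ∈ Set.Icc (0:ℝ) 1 := ⟨ht.1, ht.2.le⟩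
      calc ‖∑ i, MvPolynomial.eval (φ x₀ t) (a i) * h t i‖
          ≤ ∑ i, ‖MvPolynomial.eval (φ x₀ t) (a i) * h t i‖ := norm_sum_le _ _
        _ ≤ ∑ i, C i * ‖h t‖ := by
            apply Finset.sum_le_sum
            intro i _
            rw [norm_mul]
            exact mul_le_mul (hCb i t hIcc) (norm_le_pi_norm _ _) (norm_nonneg _) (hC0 i)
        _ = (∑ i, C i) * ‖h t‖ := by rw [Finset.sum_mul]
        _ ≤ K * ‖h t‖ := mul_le_mul_of_nonneg_right hKsum (norm_nonneg _)
  intro t ht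
  have hb := key t ht
  have : gronwallBound 0 K 0 (t - 0) = 0 := by
    rw [gronwallBound_of_K_ne_0 (by linarith : K ≠ 0)]
    simp
  rw [this] at hb
  have hzero : h t = 0 := norm_le_zero_iff.mp hb
  have := congrFun hzero 0
  simpa [hh, hg] using this

lemma in_out_exclusive {n : ℕ} {φ : (Fin n → ℝ) → ℝ → (Fin n → ℝ)}
    {A : Set (Fin n → ℝ)} {x₀ : Fin n → ℝ}
    (hin : x₀ ∈ InSet φ A) (hout : x₀ ∈ OutSet φ A) : False := by
  obtain ⟨ε₁, hε₁, h1⟩ := hin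
  obtain ⟨ε₂, hε₂, h2⟩ := hout
  set t := min ε₁ ε₂ / 2 with htd
  have htpos : 0 < t := by positivity
  have htlt : t < min ε₁ ε₂ := half_lt_self (lt_min hε₁ hε₂)
  have ht : t ∈ Set.Ioo (0:ℝ) ε₁ ∩ Set.Ioo (0:ℝ) ε₂ :=
    ⟨⟨htpos, htlt.trans_le (min_le_left _ _)⟩, ⟨htpos, htlt.trans_le (min_le_right _ _)⟩⟩
  exact h2 _ ht.2 (h1 _ ht.1)

/-- **In/Out dichotomy**: for a polynomial vector field, every point either enters
`{p ≥ 0}` immediately or leaves it immediately, and likewise for `{p > 0}`. -/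
theorem in_out_dichotomy
    {n : ℕ} (f : Fin n → MvPolynomial (Fin n) ℝ) (p : MvPolynomial (Fin n) ℝ)
    (φ : (Fin n → ℝ) → ℝ → (Fin n → ℝ)) (hφ : IsPolyFlow f φ)
    (x₀ : Fin n → ℝ) :
    Xor' (x₀ ∈ InSet φ {x | 0 ≤ MvPolynomial.eval x p})
         (x₀ ∈ OutSet φ {x | 0 ≤ MvPolynomial.eval x p}) ∧
    Xor' (x₀ ∈ InSet φ {x | 0 < MvPolynomial.eval x p})
         (x₀ ∈ OutSet φ {x | 0 < MvPolynomial.eval x p}) := by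
  classical
  by_cases hall : ∀ k, MvPolynomial.eval x₀ ((lieD f)^[k] p) = 0
  · -- the trajectory stays on {p = 0}
    have hzero := traj_zero hφ x₀ p hall
    have hin : x₀ ∈ InSet φ {x | 0 ≤ MvPolynomial.eval x p} :=
      ⟨1, one_pos, fun t ht => by
        have := hzero t ⟨ht.1.le, ht.2.le⟩
        simp [this]⟩
    have hout : x₀ ∈ OutSet φ {x | 0 < MvPolynomial.eval x p} :=
      ⟨1, one_pos, fun t ht => by
        have := hzero t ⟨ht.1.le, ht.2.le⟩
        simp [this]⟩
    exact ⟨Or.inl ⟨hin, fun h => in_out_exclusive hin h⟩,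
           Or.inr ⟨hout, fun h => in_out_exclusive h hout⟩⟩
  · push_neg at hall
    set k := Nat.find hall with hk
    have hne : MvPolynomial.eval x₀ ((lieD f)^[k] p) ≠ 0 := Nat.find_spec hall
    have hmin : ∀ j < k, MvPolynomial.eval x₀ ((lieD f)^[j] p) = 0 := fun j hj => by
      have := Nat.find_min hall hj
      simpa using this
    rcases hne.lt_or_gt with hneg | hpos
    · -- eventually negative
      obtain ⟨ε, hε, hsign⟩ := eval_sign_pos hφ x₀ k (-p)
        (fun j hj => by rw [lieD_iterate_neg]; simp [hmin j hj])
        (by rw [lieD_iterate_neg]; simpa using hneg)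
      have hlt : ∀ t ∈ Set.Ioo (0:ℝ) ε, MvPolynomial.eval (φ x₀ t) p < 0 := fun t ht => by
        have := hsign t ht
        simp only [map_neg] at this
        linarith
      have hout1 : x₀ ∈ OutSet φ {x | 0 ≤ MvPolynomial.eval x p} :=
        ⟨ε, hε, fun t ht => by simp only [Set.mem_setOf_eq, not_le]; exact hlt t ht⟩
      have hout2 : x₀ ∈ OutSet φ {x | 0 < MvPolynomial.eval x p} :=
        ⟨ε, hε, fun t ht => by simp only [Set.mem_setOf_eq, not_lt]; exact (hlt t ht).le⟩
      exact ⟨Or.inr ⟨hout1, fun h => in_out_exclusive h hout1⟩,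
             Or.inr ⟨hout2, fun h => in_out_exclusive h hout2⟩⟩
    · -- eventually positive
      obtain ⟨ε, hε, hsign⟩ := eval_sign_pos hφ x₀ k p hmin hpos
      have hin1 : x₀ ∈ InSet φ {x | 0 ≤ MvPolynomial.eval x p} :=
        ⟨ε, hε, fun t ht => (hsign t ht).le⟩
      have hin2 : x₀ ∈ InSet φ {x | 0 < MvPolynomial.eval x p} :=
        ⟨ε, hε, fun t ht => hsign t ht⟩
      exact ⟨Or.inl ⟨hin1, fun h => in_out_exclusive hin1 h⟩,
             Or.inl ⟨hin2, fun h => in_out_exclusive hin2 h⟩⟩
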